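/- Let B = ⊕_{n≥0} Bⁿ be a finitely generated graded algebra over a field with B⁰ the base field, and suppose there is a family (y_k)_{k≥1} of homogeneous elements and constants m, p ∈ ℕ with deg y_i ≤ m·i + p for all i, such that the ordered products y_{i₁} y_{i₂} ⋯ y_{i_l} over all finite strictly increasing index sequences i₁ < i₂ < ⋯ < i_l are linearly independent. Then the Gelfand–Kirillov dimension of B is infinite. -/

import Mathlib

open scoped ENNReal

private lemma gk_powMono {k B : Type*} [Field k] [Ring B] [Algebra k B]
    {V : Submodule k B} (h1 : (1:B) ∈ V) : Monotone (fun n : ℕ => V ^ n) := by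
  apply monotone_nat_of_le_succ
  intro n x hx
  rw [pow_succ]
  simpa using Submodule.mul_mem_mul hx h1

private lemma gk_sortSum (s : Finset ℕ) (d : ℕ → ℕ) :
    ((s.sort (· ≤ ·)).map d).sum = ∑ i ∈ s, d i := by
  have hp := (Finset.sort_perm_toList s (· ≤ ·)).map d
  calc ((s.sort (· ≤ ·)).map d).sum = (s.toList.map d).sum := hp.sum_eq
    _ = ((s.toList.map d : List ℕ) : Multiset ℕ).sum := (Multiset.sum_coe _).symm
    _ = (Multiset.map d s.val).sum := by rw [← Multiset.map_coe, Finset.coe_toList]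
    _ = ∑ i ∈ s, d i := rfl

/-- The Gelfand–Kirillov dimension of a `k`-algebra `A`:
`GK(A) = ⨆_V limsup_n log_n dim((V)^n)`, the supremum running over all finitely generated
(equivalently, finite-dimensional) subspaces `V` of `A`. -/
noncomputable def gkDim (k A : Type*) [Field k] [Ring A] [Algebra k A] : ℝ≥0∞ :=
  ⨆ (V : Submodule k A) (_ : V.FG),
    Filter.limsup
      (fun n : ℕ => ENNReal.ofReal (Real.logb n (Module.finrank k ↥(V ^ n))))
      Filter.atTop

/-- Lemma 2.1 of the paper (after Rosso): let `B = ⊕_{n≥0} Bⁿ` be a finitely generated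
graded algebra over a field with `B⁰ = k·1`. If there is a family `(y_i)` of homogeneous
elements with `deg y_i ≤ m·i + p` such that the ordered products
`y_{i₁} ⋯ y_{i_l}` (`i₁ < ⋯ < i_l`) are linearly independent, then `GK(B) = ∞`. -/
theorem gkDim_infinite_of_ordered_monomials {k B : Type*} [Field k] [Ring B] [Algebra k B]
    (𝒜 : ℕ → Submodule k B) [GradedRing 𝒜]
    (h0 : 𝒜 0 = Submodule.span k {(1 : B)})
    (hfg : Algebra.FiniteType k B)
    (y : ℕ → B) (d : ℕ → ℕ) (hy : ∀ i, y i ∈ 𝒜 (d i))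
    (m p : ℕ) (hd : ∀ i, d i ≤ m * i + p)
    (hli : LinearIndependent k
      (fun s : {s : Finset ℕ // s.Nonempty} => ((s.1.sort (· ≤ ·)).map y).prod)) :
    gkDim k B = ⊤ := by
  classical
  obtain ⟨S, hS⟩ := hfg.out
  set D : ℕ := S.sup (fun s => (DirectSum.decompose 𝒜 s).support.sup id) with hD
  set T : Finset B :=
    insert 1 ((S ×ˢ Finset.range (D+1)).image
      (fun q => ((DirectSum.decompose 𝒜 q.1 q.2 : 𝒜 q.2) : B))) with hT
  set V : Submodule k B := Submodule.span k (T : Set B) with hV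
  have hVfg : V.FG := ⟨T, rfl⟩
  have h1V : (1:B) ∈ V := Submodule.subset_span (by simp [hT])
  have hmono := gk_powMono (k := k) h1V
  have hVpow : ∀ {j : ℕ}, 1 ≤ j → V ≤ V ^ j := by
    intro j hj
    have := hmono hj
    simpa using this
  -- Key structural lemma: every homogeneous component of every element of `B`
  -- of degree `j` lies in `V ^ max j 1`.
  have hkey : ∀ b : B, ∀ j : ℕ,
      ((DirectSum.decompose 𝒜 b j : 𝒜 j) : B) ∈ V ^ (max j 1) := by
    intro b
    have hb : b ∈ Algebra.adjoin k (S : Set B) := by rw [hS]; trivial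
    induction hb using Algebra.adjoin_induction with
    | mem x hx =>
      intro j
      rcases le_or_gt j D with hjD | hjD
      · refine hVpow (le_max_right _ _) (Submodule.subset_span ?_)
        rw [hT]
        refine Finset.mem_coe.mpr (Finset.mem_insert_of_mem ?_)
        exact Finset.mem_image.mpr ⟨(x, j),
          Finset.mem_product.mpr ⟨hx, Finset.mem_range.mpr (by omega)⟩, rfl⟩
      · have hns : j ∉ (DirectSum.decompose 𝒜 x).support := by
          intro hmem
          have h1 : j ≤ (DirectSum.decompose 𝒜 x).support.sup id := Finset.le_sup (f := id) hmem
          have h2 : (DirectSum.decompose 𝒜 x).support.sup id ≤ D :=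
            Finset.le_sup (f := fun s => (DirectSum.decompose 𝒜 s).support.sup id) hx
          omega
        rw [DFinsupp.notMem_support_iff.mp hns]
        simpa using Submodule.zero_mem _
    | algebraMap r =>
      intro j
      have hmem : algebraMap k B r ∈ 𝒜 0 := by
        rw [Algebra.algebraMap_eq_smul_one]
        exact Submodule.smul_mem _ _ (SetLike.one_mem_graded 𝒜)
      rcases Nat.eq_zero_or_pos j with hj | hj
      · subst hj
        rw [DirectSum.decompose_of_mem_same 𝒜 hmem]
        exact hVpow (le_max_right _ _) (by
          rw [Algebra.algebraMap_eq_smul_one]; exact Submodule.smul_mem _ _ h1V)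
      · rw [DirectSum.decompose_of_mem_ne 𝒜 hmem (by omega)]
        simpa using Submodule.zero_mem _
    | add a c ha hc iha ihc =>
      intro j
      rw [DirectSum.decompose_add]
      push_cast [DirectSum.add_apply]
      exact Submodule.add_mem _ (iha j) (ihc j)
    | mul a c ha hc iha ihc =>
      intro j
      have hmul : ((DirectSum.decompose 𝒜 (a*c) j : 𝒜 j) : B) =
          ∑ ij ∈ ((DirectSum.decompose 𝒜 a).support ×ˢ
              (DirectSum.decompose 𝒜 c).support).filter (fun ij => ij.1 + ij.2 = j),
            ((DirectSum.decompose 𝒜 a ij.1 : 𝒜 ij.1) : B) *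
            ((DirectSum.decompose 𝒜 c ij.2 : 𝒜 ij.2) : B) := by
        rw [DirectSum.decompose_mul]
        exact DirectSum.coe_mul_apply 𝒜 _ _ j
      rw [hmul]
      refine Submodule.sum_mem _ ?_
      rintro ⟨u, v⟩ hf
      simp only [Finset.mem_filter, Finset.mem_product] at hf
      obtain huv : u + v = j := hf.2
      rcases Nat.eq_zero_or_pos u with hu | hu
      · subst hu
        have h0a : ((DirectSum.decompose 𝒜 a 0 : 𝒜 0) : B) ∈ Submodule.span k {(1:B)} := by
          rw [← h0]; exact SetLike.coe_mem _
        obtain ⟨ca, hca⟩ := Submodule.mem_span_singleton.mp h0a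
        rw [← hca, smul_mul_assoc, one_mul]
        have hvj : v = j := by omega
        subst hvj
        exact Submodule.smul_mem _ _ (ihc v)
      · rcases Nat.eq_zero_or_pos v with hv | hv
        · subst hv
          have h0c : ((DirectSum.decompose 𝒜 c 0 : 𝒜 0) : B) ∈ Submodule.span k {(1:B)} := by
            rw [← h0]; exact SetLike.coe_mem _
          obtain ⟨cc, hcc⟩ := Submodule.mem_span_singleton.mp h0c
          rw [← hcc, mul_smul_comm, mul_one]
          have huj : u = j := by omega
          subst huj
          exact Submodule.smul_mem _ _ (iha u)
        · have hmm := Submodule.mul_mem_mul (iha u) (ihc v)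
          rw [← pow_add] at hmm
          have he : max u 1 + max v 1 = max j 1 := by omega
          rwa [he] at hmm
  have hcomp : ∀ (j : ℕ) (x : B), x ∈ 𝒜 j → x ∈ V ^ (max j 1) := by
    intro j x hx
    have := hkey x j
    rwa [DirectSum.decompose_of_mem_same 𝒜 hx] at this
  have hlist : ∀ l : List ℕ, (l.map y).prod ∈ 𝒜 ((l.map d).sum) := by
    intro l
    induction l with
    | nil => simpa using SetLike.one_mem_graded 𝒜
    | cons a l ih => simpa using SetLike.mul_mem_graded (hy a) ih
  set n : ℕ → ℕ := fun L => m*(L+1)*(L+1) + (p+1)*(L+1) with hn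
  have hn1 : ∀ L, L + 1 ≤ n L := by
    intro L
    calc L + 1 ≤ (p+1)*(L+1) := Nat.le_mul_of_pos_left _ (Nat.succ_pos p)
      _ ≤ n L := Nat.le_add_left _ _
  have hdegbound : ∀ (L : ℕ) (s : Finset ℕ), s ⊆ Finset.range (L+1) →
      (∑ i ∈ s, d i) ≤ n L := by
    intro L s hs
    calc ∑ i ∈ s, d i ≤ ∑ i ∈ Finset.range (L+1), d i :=
          Finset.sum_le_sum_of_subset hs
      _ ≤ ∑ i ∈ Finset.range (L+1), (m*L+p) := by
          refine Finset.sum_le_sum fun i hi => ?_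
          have hiL : i ≤ L := by simpa [Nat.lt_succ_iff] using hi
          calc d i ≤ m * i + p := hd i
            _ ≤ m * L + p := by
              have := Nat.mul_le_mul_left m hiL
              omega
      _ = (L+1) * (m*L+p) := by
          rw [Finset.sum_const, Finset.card_range]; ring
      _ ≤ n L := by
          rw [hn]
          have h1 : (L+1) * (m*L) ≤ m*(L+1)*(L+1) := by
            calc (L+1) * (m*L) = m*L*(L+1) := by ring
              _ ≤ m*(L+1)*(L+1) :=
                Nat.mul_le_mul_right _ (Nat.mul_le_mul_left m (Nat.le_succ L))
          have h2 : (L+1) * p ≤ (p+1)*(L+1) := by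
            calc (L+1) * p = p * (L+1) := by ring
              _ ≤ (p+1)*(L+1) := Nat.mul_le_mul_right _ (Nat.le_succ p)
          calc (L+1) * (m*L+p) = (L+1)*(m*L) + (L+1)*p := by ring
            _ ≤ m*(L+1)*(L+1) + (p+1)*(L+1) := Nat.add_le_add h1 h2
  -- Lower bound on the dimension of `V ^ n L` from the linearly independent
  -- ordered monomials indexed by subsets of `{0, …, L}` containing `L`.
  have hcard : ∀ L : ℕ, 2 ^ L ≤ Module.finrank k ↥(V ^ (n L)) := by
    intro L
    set e : Finset (Fin L) → {s : Finset ℕ // s.Nonempty} :=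
      fun t => ⟨insert L (t.image Fin.val), Finset.insert_nonempty _ _⟩ with heq
    have hL : ∀ t : Finset (Fin L), L ∉ t.image Fin.val := by
      intro t hmem
      obtain ⟨i, _, hi⟩ := Finset.mem_image.mp hmem
      have := i.isLt
      omega
    have he : Function.Injective e := by
      intro t1 t2 h12
      have h' : insert L (t1.image Fin.val) = insert L (t2.image Fin.val) :=
        congrArg Subtype.val h12
      have h'' := congrArg (fun s => Finset.erase s L) h'
      simp only [Finset.erase_insert (hL t1), Finset.erase_insert (hL t2)] at h''
      exact Finset.image_injective Fin.val_injective h''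
    have hsub : ∀ t : Finset (Fin L), (e t).1 ⊆ Finset.range (L+1) := by
      intro t x hx
      rw [heq] at hx
      simp only [Finset.mem_insert, Finset.mem_image] at hx
      rcases hx with h | ⟨i, _, hi⟩
      · simp [h]
      · have := i.isLt
        simp only [Finset.mem_range]
        omega
    have hmemW : ∀ t : Finset (Fin L),
        ((((e t).1).sort (· ≤ ·)).map y).prod ∈ V ^ (n L) := by
      intro t
      have h1 : ((((e t).1).sort (· ≤ ·)).map y).prod ∈ 𝒜 (∑ i ∈ (e t).1, d i) := by
        have := hlist ((e t).1.sort (· ≤ ·))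
        rwa [gk_sortSum] at this
      have h2 := hcomp _ _ h1
      refine hmono (show max (∑ i ∈ (e t).1, d i) 1 ≤ n L from ?_) h2
      have hb1 := hdegbound L _ (hsub t)
      have hb2 := hn1 L
      omega
    haveI : Module.Finite k ↥(V ^ (n L)) := Module.Finite.iff_fg.mpr (hVfg.pow _)
    have hliF : LinearIndependent k
        (fun t : Finset (Fin L) =>
          (⟨((((e t).1).sort (· ≤ ·)).map y).prod, hmemW t⟩ : ↥(V ^ (n L)))) := by
      apply LinearIndependent.of_comp (V ^ (n L)).subtype
      exact hli.comp e he
    have hcle := hliF.fintype_card_le_finrank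
    simpa [Fintype.card_finset] using hcle
  -- The limsup along `V` is infinite.
  have hfreq : ∀ M : ℕ, ∃ᶠ nn : ℕ in Filter.atTop,
      (M : ℝ≥0∞) ≤ ENNReal.ofReal (Real.logb nn (Module.finrank k ↥(V ^ nn))) := by
    intro M
    have hlo := isLittleO_pow_const_const_pow_of_one_lt (R := ℝ) (2*M) one_lt_two
    have hcpos : (0:ℝ) < 1 / (((m+p+1):ℝ)^M * 2) := by positivity
    have hev := hlo.def hcpos
    rw [Filter.eventually_atTop] at hev
    obtain ⟨n0, hn0⟩ := hev
    rw [Filter.frequently_atTop]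
    intro a
    set L := max a n0 + 1 with hL
    refine ⟨n L, by have := hn1 L; omega, ?_⟩
    have hnLpos : (1:ℝ) < (n L : ℝ) := by
      have := hn1 L
      exact_mod_cast show 1 < n L by omega
    have h2L : ((n L : ℝ))^M ≤ 2^L := by
      have hb := hn0 (L+1) (by omega)
      simp only [Real.norm_eq_abs, abs_pow, Nat.abs_cast, abs_two] at hb
      have hnorm : ((L:ℝ)+1)^(2*M) ≤ (1 / (((m+p+1):ℝ)^M * 2)) * 2^(L+1) := by
        push_cast at hb ⊢
        exact hb
      have hnL : (n L : ℝ) ≤ ((m+p+1):ℝ) * ((L:ℝ)+1)^2 := by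
        have hnat : n L ≤ (m+p+1) * (L+1)^2 := by
          rw [hn]
          nlinarith [Nat.le_mul_of_pos_left (L+1) (Nat.succ_pos L)]
        calc (n L : ℝ) ≤ (((m+p+1) * (L+1)^2 : ℕ) : ℝ) := by exact_mod_cast hnat
          _ = ((m+p+1):ℝ) * ((L:ℝ)+1)^2 := by push_cast; ring
      calc ((n L : ℝ))^M ≤ (((m+p+1):ℝ) * ((L:ℝ)+1)^2)^M := by
            refine pow_le_pow_left₀ ?_ hnL M
            positivity
        _ = ((m+p+1):ℝ)^M * ((L:ℝ)+1)^(2*M) := by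
            rw [mul_pow, ← pow_mul, mul_comm 2 M]
        _ ≤ ((m+p+1):ℝ)^M * ((1 / (((m+p+1):ℝ)^M * 2)) * 2^(L+1)) := by
            refine mul_le_mul_of_nonneg_left hnorm (by positivity)
        _ = 2^L := by
            field_simp
            ring
    have hfin : ((n L:ℝ))^M ≤ (Module.finrank k ↥(V ^ (n L)) : ℝ) := by
      refine h2L.trans ?_
      exact_mod_cast hcard L
    have hlogb : (M:ℝ) ≤ Real.logb (n L) (Module.finrank k ↥(V ^ (n L))) := by
      have hM : (M:ℝ) = Real.logb (n L) ((n L:ℝ)^M) := by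
        rw [Real.logb_pow, Real.logb_self_eq_one hnLpos, mul_one]
      rw [hM]
      exact Real.logb_le_logb_of_le hnLpos (pow_pos (by linarith) M) hfin
    calc (M:ℝ≥0∞) = ENNReal.ofReal (M:ℝ) := by simp
      _ ≤ _ := ENNReal.ofReal_le_ofReal hlogb
  have hlimsup : Filter.limsup
      (fun nn : ℕ => ENNReal.ofReal (Real.logb nn (Module.finrank k ↥(V ^ nn))))
      Filter.atTop = ⊤ := by
    rw [eq_top_iff, ← ENNReal.iSup_natCast]
    exact iSup_le fun M => Filter.le_limsup_of_frequently_le' (hfreq M)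
  rw [eq_top_iff, gkDim, ← hlimsup]
  exact le_iSup₂_of_le V hVfg le_rfl
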